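/- For any subset S of a D*-ring R, the perfect D-ideal generated by S equals ⋃_{k≥0} S_k, where S₀ = S and S_{k+1} = ([S_k]_D)', with M' denoting the set of a ∈ R such that some product τ₁(a)^{k₁}⋯τ_r(a)^{k_r} lies in M for compositions τⱼ of the associated endomorphisms and positive integers kⱼ, and [M]_D denoting the D-ideal generated by M. -/

import Mathlib

open scoped BigOperators

/-- The coordinate operators of a `D*`-ring structure (with respect to a ranked basis of
`D`) on a commutative `K`-algebra `A`: operators `δ k`, the subset `σset` of associated
endomorphisms, the map `fac` sending each operator to the associated endomorphism of its
local factor, operator ranks `ν`, and structure constants `α`, subject to additivity,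
`K`-linearity, pairwise commutativity, multiplicativity and injectivity of the associated
endomorphisms, and the twisted Leibniz rule of the ranked basis. -/
structure DStarOps (K : Type) [Field K] (A : Type) [CommRing A] [Algebra K A]
    (M : ℕ) where
  δ : Fin M → A → A
  σset : Finset (Fin M)
  fac : Fin M → Fin M
  ν : Fin M → ℕ
  α : Fin M → Fin M → Fin M → K
  map_add : ∀ (k : Fin M) (a b : A), δ k (a + b) = δ k a + δ k b
  map_smul : ∀ (k : Fin M) (c : K) (a : A), δ k (c • a) = c • δ k a
  comm : ∀ (k l : Fin M) (a : A), δ k (δ l a) = δ l (δ k a)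
  fac_mem : ∀ k, fac k ∈ σset
  fac_sigma : ∀ k ∈ σset, fac k = k
  sigma_one : ∀ k ∈ σset, δ k 1 = 1
  sigma_mul : ∀ k ∈ σset, ∀ a b : A, δ k (a * b) = δ k a * δ k b
  sigma_inj : ∀ k ∈ σset, Function.Injective (δ k)
  nu_sigma : ∀ k ∈ σset, ν k = 0
  nu_delta : ∀ k ∉ σset, 1 ≤ ν k
  prod_rule : ∀ k ∉ σset, ∀ a b : A,
    δ k (a * b) = δ k a * δ (fac k) b + δ (fac k) a * δ k b +
      ∑ pq ∈ Finset.univ.filter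
          (fun pq : Fin M × Fin M =>
            pq.1 ∉ σset ∧ pq.2 ∉ σset ∧ fac pq.1 = fac k ∧ fac pq.2 = fac k ∧
              ν pq.1 + ν pq.2 ≤ ν k),
        α k pq.1 pq.2 • (δ pq.1 a * δ pq.2 b)

variable {K : Type} [Field K] {A : Type} [CommRing A] [Algebra K A] {M : ℕ}

/-- Applying a composite of the operators along a list of indices. -/
def applyWord (op : DStarOps K A M) (w : List (Fin M)) (a : A) : A :=
  w.foldr (fun k x => op.δ k x) a

/-- `b` is a `σ`-transform of `a`: the image of `a` under a composition of the
associated endomorphisms. -/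
def IsSigmaTransform (op : DStarOps K A M) (a b : A) : Prop :=
  ∃ w : List (Fin M), (∀ k ∈ w, k ∈ op.σset) ∧ b = applyWord op w a

/-- An ideal closed under all the operators (a `D`-ideal). -/
def IsDIdeal (op : DStarOps K A M) (I : Ideal A) : Prop :=
  ∀ k : Fin M, ∀ a ∈ I, op.δ k a ∈ I

/-- A reflexive ideal: `a·σᵢ(a) ∈ I` implies `a ∈ I`. -/
def IsReflexive (op : DStarOps K A M) (I : Ideal A) : Prop :=
  ∀ k ∈ op.σset, ∀ a : A, a * op.δ k a ∈ I → a ∈ I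

/-- A perfect `D`-ideal: a radical, reflexive `D`-ideal. -/
def IsPerfectDIdeal (op : DStarOps K A M) (I : Ideal A) : Prop :=
  IsDIdeal op I ∧ IsReflexive op I ∧ I.IsRadical

/-- Membership in the `D`-ideal `[S]_D` generated by `S`. -/
def InDIdealGen (op : DStarOps K A M) (S : Set A) (a : A) : Prop :=
  ∀ I : Ideal A, S ⊆ I → IsDIdeal op I → a ∈ I

/-- Membership in the reflexive `D`-ideal `⟨S⟩_D` generated by `S`. -/
def InReflexiveDIdealGen (op : DStarOps K A M) (S : Set A) (a : A) : Prop :=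
  ∀ I : Ideal A, S ⊆ I → IsDIdeal op I → IsReflexive op I → a ∈ I

/-- The shuffling operation `S ↦ S'`: all `a` such that some product
`τ₁(a)^{k₁} ⋯ τ_r(a)^{k_r}` (with `τⱼ` compositions of the associated endomorphisms and
`kⱼ > 0`) lies in `S`. -/
def shuffleSat {K : Type} [Field K] {A : Type} [CommRing A] [Algebra K A] {M : ℕ}
    (op : DStarOps K A M) (S : Set A) : Set A :=
  {a : A | ∃ l : List (List (Fin M) × ℕ), l ≠ [] ∧
    (∀ p ∈ l, (∀ k ∈ p.1, k ∈ op.σset) ∧ 0 < p.2) ∧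
    (l.map (fun p => applyWord op p.1 a ^ p.2)).prod ∈ S}

/-- The `D`-ideal generated by `S`, as a set. -/
def dIdealGenSet {K : Type} [Field K] {A : Type} [CommRing A] [Algebra K A] {M : ℕ}
    (op : DStarOps K A M) (S : Set A) : Set A :=
  {a : A | InDIdealGen op S a}

/-- The iterates `S₀ = S`, `S_{k+1} = ([S_k]_D)'`. -/
def shuffleIter {K : Type} [Field K] {A : Type} [CommRing A] [Algebra K A] {M : ℕ}
    (op : DStarOps K A M) (S : Set A) : ℕ → Set A
  | 0 => S
  | k + 1 => shuffleSat op (dIdealGenSet op (shuffleIter op S k))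

/-- The perfect `D`-ideal generated by `S`, as a set: the intersection of all perfect
`D`-ideals containing `S`. -/
def perfectDIdealGenSet {K : Type} [Field K] {A : Type} [CommRing A] [Algebra K A] {M : ℕ}
    (op : DStarOps K A M) (S : Set A) : Set A :=
  {a : A | ∀ I : Ideal A, S ⊆ I → IsPerfectDIdeal op I → a ∈ I}

section Aux

variable (op : DStarOps K A M)

lemma applyWord_nil (a : A) : applyWord op [] a = a := rfl

lemma applyWord_cons (k : Fin M) (w : List (Fin M)) (a : A) :
    applyWord op (k :: w) a = op.δ k (applyWord op w a) := rfl

lemma applyWord_one {w : List (Fin M)} (hw : ∀ k ∈ w, k ∈ op.σset) :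
    applyWord op w (1 : A) = 1 := by
  induction w with
  | nil => rfl
  | cons k w ih =>
    rw [applyWord_cons, ih (fun j hj => hw j (List.mem_cons_of_mem _ hj)),
      op.sigma_one k (hw k (List.mem_cons_self))]

lemma applyWord_mul {w : List (Fin M)} (hw : ∀ k ∈ w, k ∈ op.σset) (x y : A) :
    applyWord op w (x * y) = applyWord op w x * applyWord op w y := by
  induction w with
  | nil => rfl
  | cons k w ih =>
    rw [applyWord_cons, ih (fun j hj => hw j (List.mem_cons_of_mem _ hj)),
      op.sigma_mul k (hw k (List.mem_cons_self))]
    rfl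

lemma applyWord_pow {w : List (Fin M)} (hw : ∀ k ∈ w, k ∈ op.σset) (x : A) (n : ℕ) :
    applyWord op w (x ^ n) = applyWord op w x ^ n := by
  induction n with
  | zero => simpa using applyWord_one op hw
  | succ n ih => rw [pow_succ, applyWord_mul op hw, ih, pow_succ]

/-- Composite reflexivity: for a word `w` of associated endomorphisms,
`a · σ_w(a) ∈ I` implies `a ∈ I` in a perfect `D`-ideal. -/
lemma mem_of_mul_applyWord_mem {I : Ideal A}
    (hR : IsReflexive op I) (hrad : I.IsRadical)
    {w : List (Fin M)} (hw : ∀ k ∈ w, k ∈ op.σset) {a : A}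
    (h : a * applyWord op w a ∈ I) : a ∈ I := by
  induction w generalizing a with
  | nil => exact hrad ⟨2, by rwa [pow_two]⟩
  | cons k w ih =>
    have hk := hw k (List.mem_cons_self)
    have hw' : ∀ j ∈ w, j ∈ op.σset := fun j hj => hw j (List.mem_cons_of_mem _ hj)
    apply ih hw'
    apply hR k hk
    have key : (a * applyWord op w a) * op.δ k (a * applyWord op w a)
        = (a * applyWord op (k :: w) a) * (applyWord op w a * op.δ k a) := by
      rw [op.sigma_mul k hk, applyWord_cons]; ring
    rw [key]
    exact I.mul_mem_right _ h

lemma mul_mem_of_applyWord_mul_mem {I : Ideal A}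
    (hR : IsReflexive op I) (hrad : I.IsRadical)
    {w : List (Fin M)} (hw : ∀ k ∈ w, k ∈ op.σset) {a Q : A}
    (h : applyWord op w a * Q ∈ I) : a * Q ∈ I := by
  apply mem_of_mul_applyWord_mem op hR hrad hw (a := a * Q)
  rw [applyWord_mul op hw]
  have key : a * Q * (applyWord op w a * applyWord op w Q)
      = (applyWord op w a * Q) * (a * applyWord op w Q) := by ring
  rw [key]
  exact I.mul_mem_right _ h

lemma pow_sum_mem_of_prod_mem {I : Ideal A}
    (hR : IsReflexive op I) (hrad : I.IsRadical) {a : A} :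
    ∀ (l : List (List (Fin M) × ℕ)), (∀ p ∈ l, ∀ k ∈ p.1, k ∈ op.σset) →
    ∀ {c : A}, c * (l.map (fun p => applyWord op p.1 a ^ p.2)).prod ∈ I →
      c * a ^ (l.map Prod.snd).sum ∈ I := by
  intro l
  induction l with
  | nil => intro _ c h; simpa using h
  | cons p l ih =>
    intro hl c h
    have hp : ∀ k ∈ p.1, k ∈ op.σset := hl p (List.mem_cons_self)
    have hl' : ∀ q ∈ l, ∀ k ∈ q.1, k ∈ op.σset :=
      fun q hq => hl q (List.mem_cons_of_mem _ hq)
    have h1 : applyWord op p.1 (a ^ p.2) *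
        (c * (l.map (fun p => applyWord op p.1 a ^ p.2)).prod) ∈ I := by
      rw [applyWord_pow op hp]
      have : applyWord op p.1 a ^ p.2 *
          (c * (l.map (fun p => applyWord op p.1 a ^ p.2)).prod)
          = c * ((p :: l).map (fun p => applyWord op p.1 a ^ p.2)).prod := by
        rw [List.map_cons, List.prod_cons]; ring
      rw [this]; exact h
    have h2 := mul_mem_of_applyWord_mul_mem op hR hrad hp h1
    have h3 : (c * a ^ p.2) * (l.map (fun p => applyWord op p.1 a ^ p.2)).prod ∈ I := by
      have : (c * a ^ p.2) * (l.map (fun p => applyWord op p.1 a ^ p.2)).prod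
          = a ^ p.2 * (c * (l.map (fun p => applyWord op p.1 a ^ p.2)).prod) := by ring
      rw [this]; exact h2
    have h4 := ih hl' h3
    have : c * a ^ ((p :: l).map Prod.snd).sum
        = c * a ^ p.2 * a ^ (l.map Prod.snd).sum := by
      rw [List.map_cons, List.sum_cons, pow_add]; ring
    rw [this]; exact h4

/-- The shuffling lemma: a perfect `D`-ideal is closed under the shuffling condition. -/
lemma mem_of_shuffle {I : Ideal A} (hperf : IsPerfectDIdeal op I) {a : A}
    {l : List (List (Fin M) × ℕ)} (hl : ∀ p ∈ l, (∀ k ∈ p.1, k ∈ op.σset) ∧ 0 < p.2)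
    (h : (l.map (fun p => applyWord op p.1 a ^ p.2)).prod ∈ I) : a ∈ I := by
  obtain ⟨hD, hR, hrad⟩ := hperf
  have h1 : (1 : A) * (l.map (fun p => applyWord op p.1 a ^ p.2)).prod ∈ I := by
    rwa [one_mul]
  have h2 := pow_sum_mem_of_prod_mem op hR hrad l (fun p hp => (hl p hp).1) h1
  rw [one_mul] at h2
  exact hrad ⟨_, h2⟩

lemma subset_dIdealGenSet (S : Set A) : S ⊆ dIdealGenSet op S :=
  fun _ ha _ hS _ => hS ha

lemma dIdealGenSet_subset {S : Set A} {I : Ideal A} (hS : S ⊆ I) (hD : IsDIdeal op I) :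
    dIdealGenSet op S ⊆ I := fun _ ha => ha I hS hD

lemma dIdealGenSet_zero (S : Set A) : (0 : A) ∈ dIdealGenSet op S :=
  fun I _ _ => I.zero_mem

lemma dIdealGenSet_add {S : Set A} {x y : A} (hx : x ∈ dIdealGenSet op S)
    (hy : y ∈ dIdealGenSet op S) : x + y ∈ dIdealGenSet op S :=
  fun I hS hD => I.add_mem (hx I hS hD) (hy I hS hD)

lemma dIdealGenSet_mul_left {S : Set A} (c : A) {x : A} (hx : x ∈ dIdealGenSet op S) :
    c * x ∈ dIdealGenSet op S :=
  fun I hS hD => I.mul_mem_left c (hx I hS hD)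

lemma dIdealGenSet_delta {S : Set A} (k : Fin M) {x : A} (hx : x ∈ dIdealGenSet op S) :
    op.δ k x ∈ dIdealGenSet op S :=
  fun I hS hD => hD k x (hx I hS hD)

lemma subset_shuffleSat (S : Set A) : S ⊆ shuffleSat op S := by
  intro a ha
  refine ⟨[([], 1)], by simp, by simp, ?_⟩
  simpa [applyWord] using ha

lemma shuffleIter_subset_succ (S : Set A) (k : ℕ) :
    shuffleIter op S k ⊆ shuffleIter op S (k + 1) := by
  intro a ha
  exact subset_shuffleSat op _ (subset_dIdealGenSet op _ ha)

lemma shuffleIter_mono (S : Set A) {j k : ℕ} (h : j ≤ k) :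
    shuffleIter op S j ⊆ shuffleIter op S k := by
  induction h with
  | refl => exact fun _ h => h
  | step h ih => exact fun x hx => shuffleIter_subset_succ op S _ (ih hx)

lemma dIdealGenSet_shuffleIter_subset_succ (S : Set A) (k : ℕ) :
    dIdealGenSet op (shuffleIter op S k) ⊆ shuffleIter op S (k + 1) :=
  subset_shuffleSat op _

/-- The union of the iterates, as an ideal. -/
def unionIdeal (S : Set A) : Ideal A where
  carrier := ⋃ k : ℕ, shuffleIter op S k
  zero_mem' := by
    refine Set.mem_iUnion.2 ⟨1, ?_⟩
    exact dIdealGenSet_shuffleIter_subset_succ op S 0 (dIdealGenSet_zero op _)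
  add_mem' := by
    intro x y hx hy
    obtain ⟨j, hj⟩ := Set.mem_iUnion.1 hx
    obtain ⟨k, hk⟩ := Set.mem_iUnion.1 hy
    refine Set.mem_iUnion.2 ⟨max j k + 1, ?_⟩
    apply dIdealGenSet_shuffleIter_subset_succ op S (max j k)
    exact dIdealGenSet_add op
      (subset_dIdealGenSet op _ (shuffleIter_mono op S (le_max_left j k) hj))
      (subset_dIdealGenSet op _ (shuffleIter_mono op S (le_max_right j k) hk))
  smul_mem' := by
    intro c x hx
    obtain ⟨k, hk⟩ := Set.mem_iUnion.1 hx
    refine Set.mem_iUnion.2 ⟨k + 1, ?_⟩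
    apply dIdealGenSet_shuffleIter_subset_succ op S k
    simpa [smul_eq_mul] using dIdealGenSet_mul_left op c (subset_dIdealGenSet op _ hk)

lemma unionIdeal_isDIdeal (S : Set A) : IsDIdeal op (unionIdeal op S) := by
  intro k a ha
  obtain ⟨j, hj⟩ := Set.mem_iUnion.1 ha
  refine Set.mem_iUnion.2 ⟨j + 1, ?_⟩
  exact dIdealGenSet_shuffleIter_subset_succ op S j
    (dIdealGenSet_delta op k (subset_dIdealGenSet op _ hj))

lemma unionIdeal_isReflexive (S : Set A) : IsReflexive op (unionIdeal op S) := by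
  intro k hk a ha
  obtain ⟨j, hj⟩ := Set.mem_iUnion.1 ha
  refine Set.mem_iUnion.2 ⟨j + 1, ?_⟩
  refine ⟨[([], 1), ([k], 1)], by simp, ?_, ?_⟩
  · intro p hp
    simp only [List.mem_cons, List.not_mem_nil, or_false] at hp
    rcases hp with rfl | rfl <;> simp [hk]
  · have : ([([], 1), ([k], 1)].map
        (fun p : List (Fin M) × ℕ => applyWord op p.1 a ^ p.2)).prod
        = a * op.δ k a := by
      simp [applyWord]
    rw [this]
    exact subset_dIdealGenSet op _ hj

lemma unionIdeal_isRadical (S : Set A) : (unionIdeal op S).IsRadical := by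
  intro a ha
  obtain ⟨n, hn⟩ := ha
  obtain ⟨j, hj⟩ := Set.mem_iUnion.1 hn
  rcases Nat.eq_zero_or_pos n with rfl | hpos
  · refine Set.mem_iUnion.2 ⟨j + 1, ?_⟩
    apply dIdealGenSet_shuffleIter_subset_succ op S j
    have h1 : (1 : A) ∈ dIdealGenSet op (shuffleIter op S j) := by
      simpa using subset_dIdealGenSet op _ hj
    simpa using dIdealGenSet_mul_left op a h1
  · refine Set.mem_iUnion.2 ⟨j + 1, ?_⟩
    refine ⟨[([], n)], by simp, by simp [hpos], ?_⟩
    have : ([([], n)].map (fun p : List (Fin M) × ℕ => applyWord op p.1 a ^ p.2)).prod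
        = a ^ n := by simp [applyWord]
    rw [this]
    exact subset_dIdealGenSet op _ hj

lemma shuffleIter_subset_perfect {I : Ideal A} {S : Set A} (hS : S ⊆ I)
    (hperf : IsPerfectDIdeal op I) : ∀ k, shuffleIter op S k ⊆ I := by
  intro k
  induction k with
  | zero => exact hS
  | succ k ih =>
    intro a ha
    obtain ⟨l, _, hl, hprod⟩ := ha
    exact mem_of_shuffle op hperf hl (dIdealGenSet_subset op ih hperf.1 hprod)

end Aux

/-- The perfect `D`-ideal generated by `S` is the union of the iterates
`S₀ = S`, `S_{k+1} = ([S_k]_D)'`. -/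
theorem perfectDIdealGen_eq_iUnion_shuffleIter
    {K : Type} [Field K] {A : Type} [CommRing A] [Algebra K A]
    {M : ℕ} (op : DStarOps K A M) (S : Set A) :
    perfectDIdealGenSet op S = ⋃ k : ℕ, shuffleIter op S k := by
  apply Set.Subset.antisymm
  · intro a ha
    exact ha (unionIdeal op S)
      (fun x hx => Set.mem_iUnion.2 ⟨0, hx⟩)
      ⟨unionIdeal_isDIdeal op S, unionIdeal_isReflexive op S, unionIdeal_isRadical op S⟩
  · intro a ha
    obtain ⟨k, hk⟩ := Set.mem_iUnion.1 ha
    intro I hSI hperf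
    exact shuffleIter_subset_perfect op hSI hperf k hk
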